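/- Let Φ be an operator on ℂ^{d_1} ⊗ ℂ^{d_2} and define Λ(ρ) = tr_1[Φ(ρ^T ⊗ 1)]. Then Λ is a positive map (Λ(X) ≥ 0 for all positive semidefinite X) if and only if Φ is block-positive, i.e. ⟨φ|⟨ψ| Φ |φ⟩|ψ⟩ ≥ 0 for all vectors φ ∈ ℂ^{d_1}, ψ ∈ ℂ^{d_2}. -/

import Mathlib

open Matrix ComplexOrder

/-- Tensor product `X ⊗ Y` of matrices of possibly different sizes. -/
noncomputable def kron {d₁ d₂ : ℕ} (X : Matrix (Fin d₁) (Fin d₁) ℂ)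
    (Y : Matrix (Fin d₂) (Fin d₂) ℂ) :
    Matrix (Fin d₁ × Fin d₂) (Fin d₁ × Fin d₂) ℂ :=
  Matrix.of fun p q => X p.1 q.1 * Y p.2 q.2

/-- The map Λ(ρ) = tr₁[Φ(ρᵀ ⊗ 1)]. -/
noncomputable def choiMap {d₁ d₂ : ℕ}
    (Φ : Matrix (Fin d₁ × Fin d₂) (Fin d₁ × Fin d₂) ℂ)
    (ρ : Matrix (Fin d₁) (Fin d₁) ℂ) : Matrix (Fin d₂) (Fin d₂) ℂ :=
  Matrix.of fun a b => ∑ x : Fin d₁, (Φ * kron ρᵀ (1 : Matrix (Fin d₂) (Fin d₂) ℂ)) (x, a) (x, b)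

lemma sum_comm' {α β : Type*} [Fintype α] [Fintype β] (g : α → β → ℂ) :
    ∑ a, ∑ b, g a b = ∑ b, ∑ a, g a b := Finset.sum_comm

lemma sum4 {α β : Type*} [Fintype α] [Fintype β] (g : α → α → β → β → ℂ) :
    ∑ a, ∑ b, ∑ x, ∑ y, g a b x y = ∑ x, ∑ y, ∑ a, ∑ b, g a b x y := by
  have h1 : (∑ p : (α × α) × (β × β), g p.1.1 p.1.2 p.2.1 p.2.2)
      = ∑ a, ∑ b, ∑ x, ∑ y, g a b x y := by
    simp only [Fintype.sum_prod_type]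
  have h2 : (∑ p : (β × β) × (α × α), g p.2.1 p.2.2 p.1.1 p.1.2)
      = ∑ x, ∑ y, ∑ a, ∑ b, g a b x y := by
    simp only [Fintype.sum_prod_type]
  rw [← h1, ← h2]
  exact Fintype.sum_equiv (Equiv.prodComm _ _) _ _ (fun p => rfl)

lemma choiMap_apply {d₁ d₂ : ℕ} (Φ : Matrix (Fin d₁ × Fin d₂) (Fin d₁ × Fin d₂) ℂ)
    (X : Matrix (Fin d₁) (Fin d₁) ℂ) (a b : Fin d₂) :
    choiMap Φ X a b = ∑ x : Fin d₁, ∑ y : Fin d₁, Φ (x, a) (y, b) * X x y := by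
  simp [choiMap, kron, Matrix.mul_apply, Fintype.sum_prod_type, Matrix.one_apply,
    mul_ite, mul_zero, mul_one]

lemma quad_eq {d₁ d₂ : ℕ} (Φ : Matrix (Fin d₁ × Fin d₂) (Fin d₁ × Fin d₂) ℂ)
    (X : Matrix (Fin d₁) (Fin d₁) ℂ) (ψ : Fin d₂ → ℂ) :
    star ψ ⬝ᵥ (choiMap Φ X).mulVec ψ =
      ∑ x : Fin d₁, ∑ y : Fin d₁,
        X x y * (∑ a : Fin d₂, ∑ b : Fin d₂, star (ψ a) * Φ (x, a) (y, b) * ψ b) := by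
  have step1 : star ψ ⬝ᵥ (choiMap Φ X).mulVec ψ
      = ∑ a : Fin d₂, ∑ b : Fin d₂, ∑ x : Fin d₁, ∑ y : Fin d₁,
          X x y * (star (ψ a) * Φ (x, a) (y, b) * ψ b) := by
    simp only [dotProduct, mulVec, choiMap_apply, Pi.star_apply, Finset.sum_mul,
      Finset.mul_sum]
    refine Finset.sum_congr rfl fun a _ => Finset.sum_congr rfl fun b _ =>
      Finset.sum_congr rfl fun x _ => Finset.sum_congr rfl fun y _ => by ring
  rw [step1, sum4]
  refine Finset.sum_congr rfl fun x _ => Finset.sum_congr rfl fun y _ => ?_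
  rw [Finset.mul_sum]
  exact Finset.sum_congr rfl fun a _ => (Finset.mul_sum _ _ _).symm

lemma block_eq {d₁ d₂ : ℕ} (Φ : Matrix (Fin d₁ × Fin d₂) (Fin d₁ × Fin d₂) ℂ)
    (φ : Fin d₁ → ℂ) (ψ : Fin d₂ → ℂ) :
    star (fun p : Fin d₁ × Fin d₂ => φ p.1 * ψ p.2) ⬝ᵥ
        Φ.mulVec (fun p : Fin d₁ × Fin d₂ => φ p.1 * ψ p.2) =
      ∑ x : Fin d₁, ∑ y : Fin d₁,
        (star (φ x) * φ y) *
          (∑ a : Fin d₂, ∑ b : Fin d₂, star (ψ a) * Φ (x, a) (y, b) * ψ b) := by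
  have step1 : star (fun p : Fin d₁ × Fin d₂ => φ p.1 * ψ p.2) ⬝ᵥ
        Φ.mulVec (fun p : Fin d₁ × Fin d₂ => φ p.1 * ψ p.2)
      = ∑ x : Fin d₁, ∑ a : Fin d₂, ∑ y : Fin d₁, ∑ b : Fin d₂,
          (star (φ x) * φ y) * (star (ψ a) * Φ (x, a) (y, b) * ψ b) := by
    simp only [dotProduct, mulVec, Fintype.sum_prod_type, Pi.star_apply, Finset.mul_sum,
      Finset.sum_mul, star_mul']
    refine Finset.sum_congr rfl fun x _ => Finset.sum_congr rfl fun a _ =>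
      Finset.sum_congr rfl fun y _ => Finset.sum_congr rfl fun b _ => by ring
  rw [step1]
  refine Finset.sum_congr rfl fun x _ => ?_
  rw [sum_comm' (fun a y => ∑ b, (star (φ x) * φ y) * (star (ψ a) * Φ (x, a) (y, b) * ψ b))]
  refine Finset.sum_congr rfl fun y _ => ?_
  rw [Finset.mul_sum]
  exact Finset.sum_congr rfl fun a _ => (Finset.mul_sum _ _ _).symm

lemma hermitian_of_nonneg {n : Type*} [Fintype n] [DecidableEq n] (M : Matrix n n ℂ)
    (h : ∀ z : n → ℂ, 0 ≤ star z ⬝ᵥ M.mulVec z) : M.IsHermitian := by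
  rw [Matrix.isHermitian_iff_isSymmetric, LinearMap.isSymmetric_iff_inner_map_self_real]
  intro v
  have hconj : ∀ w : n → ℂ, (starRingEnd ℂ) (star w ⬝ᵥ M.mulVec w) = star w ⬝ᵥ M.mulVec w := by
    intro w
    have h0 := h w
    rw [Complex.le_def] at h0
    rw [Complex.conj_eq_iff_im]
    exact h0.2.symm
  set w : n → ℂ := (WithLp.equiv 2 (n → ℂ)) v with hw
  have key : (inner ℂ (Matrix.toEuclideanLin M v) v : ℂ) = star (M.mulVec w) ⬝ᵥ w := by
    rw [EuclideanSpace.inner_eq_star_dotProduct, dotProduct_comm]; rfl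
  rw [key]
  have h2 : star (M.mulVec w) ⬝ᵥ w = (starRingEnd ℂ) (star w ⬝ᵥ M.mulVec w) := by
    rw [Matrix.star_dotProduct]; rfl
  rw [h2, hconj, hconj]

/-- Λ is a positive map iff Φ is block-positive. -/
theorem positive_map_iff_block_positive (d₁ d₂ : ℕ)
    (Φ : Matrix (Fin d₁ × Fin d₂) (Fin d₁ × Fin d₂) ℂ) :
    (∀ X : Matrix (Fin d₁) (Fin d₁) ℂ, X.PosSemidef → (choiMap Φ X).PosSemidef) ↔
      ∀ (φ : Fin d₁ → ℂ) (ψ : Fin d₂ → ℂ),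
        0 ≤ star (fun p : Fin d₁ × Fin d₂ => φ p.1 * ψ p.2) ⬝ᵥ
            Φ.mulVec (fun p : Fin d₁ × Fin d₂ => φ p.1 * ψ p.2) := by
  constructor
  · intro hpos φ ψ
    set X : Matrix (Fin d₁) (Fin d₁) ℂ := Matrix.of (fun x y => star (φ x) * φ y) with hX
    have hXps : X.PosSemidef := by
      have : X = (Matrix.of (fun (_ : Fin 1) (x : Fin d₁) => φ x))ᴴ *
          (Matrix.of (fun (_ : Fin 1) (x : Fin d₁) => φ x)) := by
        ext x y
        simp [Matrix.mul_apply, Matrix.conjTranspose_apply, hX]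
      rw [this]
      exact Matrix.posSemidef_conjTranspose_mul_self _
    have hq := (hpos X hXps).dotProduct_mulVec_nonneg ψ
    rw [quad_eq] at hq
    rw [block_eq]
    exact hq
  · intro hbp X hX
    have h2 : ∀ ψ : Fin d₂ → ℂ, 0 ≤ star ψ ⬝ᵥ (choiMap Φ X).mulVec ψ := by
      intro ψ
      rw [quad_eq]
      obtain ⟨B, hB⟩ : ∃ B : Matrix (Fin d₁) (Fin d₁) ℂ, X = Bᴴ * B := by
        open scoped MatrixOrder in
        exact CStarAlgebra.nonneg_iff_eq_star_mul_self.mp hX.nonneg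
      have key : ∑ x : Fin d₁, ∑ y : Fin d₁,
            X x y * (∑ a : Fin d₂, ∑ b : Fin d₂, star (ψ a) * Φ (x, a) (y, b) * ψ b)
          = ∑ i : Fin d₁, ∑ x : Fin d₁, ∑ y : Fin d₁,
              (star (B i x) * B i y) *
                (∑ a : Fin d₂, ∑ b : Fin d₂, star (ψ a) * Φ (x, a) (y, b) * ψ b) := by
        have hXe : ∀ x y, X x y = ∑ i : Fin d₁, star (B i x) * B i y := by
          intro x y
          rw [hB]
          simp [Matrix.mul_apply, Matrix.conjTranspose_apply]
        calc ∑ x : Fin d₁, ∑ y : Fin d₁,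
              X x y * (∑ a : Fin d₂, ∑ b : Fin d₂, star (ψ a) * Φ (x, a) (y, b) * ψ b)
            = ∑ x : Fin d₁, ∑ y : Fin d₁, ∑ i : Fin d₁,
              (star (B i x) * B i y) *
                (∑ a : Fin d₂, ∑ b : Fin d₂, star (ψ a) * Φ (x, a) (y, b) * ψ b) := by
              refine Finset.sum_congr rfl fun x _ => Finset.sum_congr rfl fun y _ => ?_
              rw [hXe, Finset.sum_mul]
          _ = ∑ x : Fin d₁, ∑ i : Fin d₁, ∑ y : Fin d₁,
              (star (B i x) * B i y) *
                (∑ a : Fin d₂, ∑ b : Fin d₂, star (ψ a) * Φ (x, a) (y, b) * ψ b) := by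
              refine Finset.sum_congr rfl fun x _ => ?_
              exact sum_comm' (fun y i => (star (B i x) * B i y) *
                (∑ a : Fin d₂, ∑ b : Fin d₂, star (ψ a) * Φ (x, a) (y, b) * ψ b))
          _ = ∑ i : Fin d₁, ∑ x : Fin d₁, ∑ y : Fin d₁,
              (star (B i x) * B i y) *
                (∑ a : Fin d₂, ∑ b : Fin d₂, star (ψ a) * Φ (x, a) (y, b) * ψ b) :=
              sum_comm' _
      rw [key]
      apply Finset.sum_nonneg
      intro i _
      have := hbp (fun x => B i x) ψ
      rwa [block_eq] at this
    exact Matrix.PosSemidef.of_dotProduct_mulVec_nonneg (hermitian_of_nonneg _ h2) h2
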